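/- Asymptotic-preserving limit of the first-order scheme: fix L ≥ 1, σ_e ≥ 0 and w^n : Fin L → ℝ, and for each σ > 0 let v(σ) : Fin L → ℝ be the unique solution of the periodic implicit relation v(σ)_j + σ (v(σ)_j − v(σ)_{j−1}) = w_j^n − σ_e (w_j^n − w_{j−1}^n) for all j (indices cyclic mod L). Then, as σ → ∞, v(σ)_j converges for every j to the mean value (1/L) Σ_k w_k^n; i.e. in the vanishing-Mach-number limit the scheme projects onto the constant state equal to the average of w^n. -/

import Mathlib

open Filter Topology Finset
open Fin.NatCast

private lemma aux_rec {L : ℕ} [NeZero L] (σ : ℝ) (u b : Fin L → ℝ)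
    (h : ∀ j, (1 + σ) * u j = b j + σ * u (j - 1)) :
    ∀ (n : ℕ) (j : Fin L),
      (1 + σ) ^ n * u j =
        (∑ k ∈ Finset.range n, σ ^ k * (1 + σ) ^ (n - 1 - k) * b (j - (k : Fin L)))
          + σ ^ n * u (j - (n : Fin L)) := by
  intro n
  induction n with
  | zero => intro j; simp
  | succ n ih =>
    intro j
    have e1 : (1 + σ) ^ (n + 1) * u j = (1 + σ) ^ n * ((1 + σ) * u j) := by ring
    rw [e1, h j, mul_add, show (1 + σ) ^ n * (σ * u (j - 1)) = σ * ((1 + σ) ^ n * u (j - 1))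
      from by ring, ih (j - 1), Finset.sum_range_succ']
    have ecast : ∀ k : ℕ, j - 1 - (k : Fin L) = j - ((k + 1 : ℕ) : Fin L) := by
      intro k; push_cast; rw [sub_sub, add_comm]
    have hsum : ∀ k ∈ Finset.range n,
        σ ^ (k + 1) * (1 + σ) ^ (n + 1 - 1 - (k + 1)) * b (j - ((k + 1 : ℕ) : Fin L))
          = σ * (σ ^ k * (1 + σ) ^ (n - 1 - k) * b (j - 1 - (k : Fin L))) := by
      intro k hk
      rw [ecast k, show n + 1 - 1 - (k + 1) = n - 1 - k from by omega]
      ring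
    rw [Finset.sum_congr rfl hsum, ← Finset.mul_sum, ecast n]
    push_cast
    ring_nf
    simp [Nat.sub_zero]

theorem first_order_scheme_AP_limit (L : ℕ) [NeZero L] (σe : ℝ) (hσe : 0 ≤ σe)
    (wn : Fin L → ℝ) (v : ℝ → Fin L → ℝ)
    (hv : ∀ σ : ℝ, 0 < σ → ∀ j : Fin L,
      v σ j + σ * (v σ j - v σ (j - 1)) = wn j - σe * (wn j - wn (j - 1))) :
    ∀ j : Fin L,
      Tendsto (fun σ : ℝ => v σ j) atTop (𝓝 ((∑ k : Fin L, wn k) / L)) := by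
  intro j
  set b : Fin L → ℝ := fun i => wn i - σe * (wn i - wn (i - 1)) with hb
  have hSshift : ∑ i : Fin L, wn (i - 1) = ∑ i : Fin L, wn i :=
    Fintype.sum_equiv (Equiv.subRight (1 : Fin L)) _ _ (fun i => rfl)
  have hSb : ∑ i : Fin L, b i = ∑ i : Fin L, wn i := by
    simp only [hb, Finset.sum_sub_distrib, ← Finset.mul_sum, hSshift]
    ring
  set Φ : ℝ → ℝ := fun t => ∑ k ∈ Finset.range L, (t + 1) ^ (L - 1 - k) * b (j - (k : Fin L))
    with hΦdef
  set Ψ : ℝ → ℝ := fun t => ∑ k ∈ Finset.range L, (t + 1) ^ (L - 1 - k) with hΨdef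
  have hΦc : Continuous Φ := by
    apply continuous_finset_sum
    intro k _
    fun_prop
  have hΨc : Continuous Ψ := by
    apply continuous_finset_sum
    intro k _
    fun_prop
  have hΨ0 : Ψ 0 = (L : ℝ) := by simp [hΨdef]
  have hΦ0 : Φ 0 = ∑ i : Fin L, wn i := by
    have h1 : Φ 0 = ∑ k ∈ Finset.range L, b (j - (k : Fin L)) := by simp [hΦdef]
    rw [h1, ← Fin.sum_univ_eq_sum_range (fun k : ℕ => b (j - (k : Fin L))) L]
    simp only [Fin.cast_val_eq_self]
    rw [Fintype.sum_equiv (Equiv.subLeft j) (fun i => b (j - i)) b (fun i => rfl), hSb]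
  have hinv : Tendsto (fun σ : ℝ => σ⁻¹) atTop (𝓝 (0 : ℝ)) := tendsto_inv_atTop_zero
  have hF : Tendsto (fun σ : ℝ => Φ σ⁻¹) atTop (𝓝 (Φ 0)) := (hΦc.tendsto 0).comp hinv
  have hG : Tendsto (fun σ : ℝ => Ψ σ⁻¹) atTop (𝓝 (Ψ 0)) := (hΨc.tendsto 0).comp hinv
  have hLne : (Ψ 0) ≠ 0 := by
    rw [hΨ0]; exact_mod_cast Nat.cast_ne_zero.mpr (NeZero.ne L)
  have hdiv : Tendsto (fun σ : ℝ => Φ σ⁻¹ / Ψ σ⁻¹) atTop (𝓝 (Φ 0 / Ψ 0)) := hF.div hG hLne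
  rw [hΦ0, hΨ0] at hdiv
  apply hdiv.congr'
  filter_upwards [eventually_gt_atTop (0 : ℝ)] with σ hσ
  have hσ' : σ ≠ 0 := ne_of_gt hσ
  have hrec := aux_rec σ (v σ) b (fun i => by
    have := hv σ hσ i
    simp only [hb]
    ring_nf
    ring_nf at this
    linarith) L j
  rw [Fin.natCast_self, sub_zero] at hrec
  have hgeq : (∑ k ∈ Finset.range L, σ ^ k * (1 + σ) ^ (L - 1 - k))
      = (1 + σ) ^ L - σ ^ L := by
    have hg := geom_sum₂_mul σ (1 + σ) L
    have : σ - (1 + σ) = -1 := by ring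
    rw [this] at hg
    linarith
  have key : v σ j * ((1 + σ) ^ L - σ ^ L)
      = ∑ k ∈ Finset.range L, σ ^ k * (1 + σ) ^ (L - 1 - k) * b (j - (k : Fin L)) := by
    linear_combination hrec
  have ht : ∀ k ∈ Finset.range L,
      (σ⁻¹ + 1) ^ (L - 1 - k) = σ ^ k * (1 + σ) ^ (L - 1 - k) * (σ⁻¹) ^ (L - 1) := by
    intro k hk
    have hkL : k < L := Finset.mem_range.mp hk
    have hkm : k + (L - 1 - k) = L - 1 := by omega
    have h2 : (σ⁻¹ + 1) = (1 + σ) * σ⁻¹ := by field_simp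
    have hpow : (σ⁻¹ : ℝ) ^ (L - 1) = σ⁻¹ ^ k * σ⁻¹ ^ (L - 1 - k) := by
      rw [← pow_add, hkm]
    have h3 : σ ^ k * σ⁻¹ ^ k = 1 := by
      rw [← mul_pow, mul_inv_cancel₀ hσ', one_pow]
    rw [hpow, h2, mul_pow]
    linear_combination (-((1 + σ) ^ (L - 1 - k) * σ⁻¹ ^ (L - 1 - k))) * h3
  have key2 : v σ j * Ψ σ⁻¹ = Φ σ⁻¹ := by
    calc v σ j * Ψ σ⁻¹
        = v σ j * ∑ k ∈ Finset.range L,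
            σ ^ k * (1 + σ) ^ (L - 1 - k) * (σ⁻¹) ^ (L - 1) := by
          rw [hΨdef]; exact congrArg _ (Finset.sum_congr rfl ht)
      _ = (v σ j * ((1 + σ) ^ L - σ ^ L)) * (σ⁻¹) ^ (L - 1) := by
          rw [← Finset.sum_mul, hgeq]; ring
      _ = (∑ k ∈ Finset.range L,
            σ ^ k * (1 + σ) ^ (L - 1 - k) * b (j - (k : Fin L))) * (σ⁻¹) ^ (L - 1) := by
          rw [key]
      _ = ∑ k ∈ Finset.range L,
            (σ ^ k * (1 + σ) ^ (L - 1 - k) * (σ⁻¹) ^ (L - 1)) * b (j - (k : Fin L)) := by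
          rw [Finset.sum_mul]; exact Finset.sum_congr rfl (fun k _ => by ring)
      _ = Φ σ⁻¹ := by
          rw [hΦdef]; exact Finset.sum_congr rfl (fun k hk => by rw [← ht k hk])
  have hΨpos : 0 < Ψ σ⁻¹ := by
    apply Finset.sum_pos
    · intro k _
      have : (0 : ℝ) < σ⁻¹ + 1 := by positivity
      exact pow_pos this _
    · exact Finset.nonempty_range_iff.mpr (NeZero.ne L)
  rw [← key2, mul_div_assoc, div_self (ne_of_gt hΨpos), mul_one]
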